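/- Under the same assumptions, the pressure error of the ideal multiscale method satisfies ‖p − p_H‖_{L²(Ω)} ≤ C(H·‖f − P_H f‖_{L²(Ω)} + ‖p − P_H p‖_{L²(Ω)}), where C depends on α, β, and the inf-sup constant of the pair (V^ms, Q_H ∩ L²₀(Ω)), but not on H or the oscillations of A. -/

import Mathlib

open scoped RealInnerProductSpace

section Aux

variable {L2v : Type*} [NormedAddCommGroup L2v] [InnerProductSpace ℝ L2v]

/-- Cauchy–Schwarz for a positive semidefinite symmetric continuous bilinear form. -/
lemma psd_form_cauchy_schwarz (Ainv : L2v →L[ℝ] L2v)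
    (hAsym : ∀ w z : L2v, ⟪Ainv w, z⟫ = ⟪w, Ainv z⟫)
    (hpos : ∀ w : L2v, 0 ≤ ⟪Ainv w, w⟫) (x y : L2v) :
    |⟪Ainv x, y⟫| ≤ Real.sqrt ⟪Ainv x, x⟫ * Real.sqrt ⟪Ainv y, y⟫ := by
  have hsymm : ⟪Ainv y, x⟫ = ⟪Ainv x, y⟫ := by
    rw [hAsym, real_inner_comm]
  have hdisc : discrim ⟪Ainv x, x⟫ (2 * ⟪Ainv x, y⟫) ⟪Ainv y, y⟫ ≤ 0 := by
    apply discrim_le_zero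
    intro t
    have h0 := hpos (t • x + y)
    have expand : ⟪Ainv (t • x + y), t • x + y⟫
        = ⟪Ainv x, x⟫ * (t * t) + 2 * ⟪Ainv x, y⟫ * t + ⟪Ainv y, y⟫ := by
      simp only [map_add, map_smul, inner_add_left, inner_add_right,
        real_inner_smul_left, real_inner_smul_right, hsymm]
      ring
    rw [expand] at h0
    exact h0
  rw [discrim] at hdisc
  have h1 : ⟪Ainv x, y⟫ ^ 2 ≤ ⟪Ainv x, x⟫ * ⟪Ainv y, y⟫ := by nlinarith
  calc |⟪Ainv x, y⟫| = Real.sqrt (⟪Ainv x, y⟫ ^ 2) := (Real.sqrt_sq_eq_abs _).symm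
    _ ≤ Real.sqrt (⟪Ainv x, x⟫ * ⟪Ainv y, y⟫) := Real.sqrt_le_sqrt h1
    _ = Real.sqrt ⟪Ainv x, x⟫ * Real.sqrt ⟪Ainv y, y⟫ := Real.sqrt_mul (hpos x) _

end Aux

set_option maxHeartbeats 1000000 in
/-- **Pressure error estimate for the ideal multiscale method:**
`‖p − p_H‖ ≤ C(H·‖f − P_H f‖ + ‖p − P_H p‖)` with explicit constant
`C = 1 + ρms⁻¹(β·C_P + 1)` depending only on the spectral bounds `α, β` of `A⁻¹`,
the inf-sup constant `ρms` of the pair `(V^ms, Q_H ∩ L²₀)` and the projection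
constant `C_P`, but not on the mesh size `H` or the oscillations of `A`.
Abstract setting as in the energy-norm error estimate, together with the inf-sup
stability of `b(v,q) = (div v, q)` on the multiscale pair and the `H(div)`-norm
bounds `‖ι v‖ ≤ ‖v‖`, `‖D v‖ ≤ ‖v‖`. -/
theorem ideal_pressure_error_estimate
    {Hdiv L2v S H1 : Type*}
    [NormedAddCommGroup Hdiv] [InnerProductSpace ℝ Hdiv] [CompleteSpace Hdiv]
    [NormedAddCommGroup L2v] [InnerProductSpace ℝ L2v] [CompleteSpace L2v]
    [NormedAddCommGroup S] [InnerProductSpace ℝ S] [CompleteSpace S]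
    [NormedAddCommGroup H1] [InnerProductSpace ℝ H1] [CompleteSpace H1]
    (ι : Hdiv →L[ℝ] L2v) (D : Hdiv →L[ℝ] S)
    (hι : ∀ v : Hdiv, ‖ι v‖ ≤ ‖v‖) (hD : ∀ v : Hdiv, ‖D v‖ ≤ ‖v‖)
    (G : H1 →L[ℝ] L2v) (j : H1 →L[ℝ] S)
    (Ainv : L2v →L[ℝ] L2v) (hAsym : ∀ w z : L2v, ⟪Ainv w, z⟫ = ⟪w, Ainv z⟫)
    (α β : ℝ) (hα : 0 < α) (hβ : 0 < β)
    (hlow : ∀ w : L2v, α * ‖w‖ ^ 2 ≤ ⟪Ainv w, w⟫)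
    (hupp : ∀ w : L2v, ⟪Ainv w, w⟫ ≤ β * ‖w‖ ^ 2)
    (QH L0 : Submodule ℝ S) [Submodule.HasOrthogonalProjection QH]
    (hPL0 : ∀ q ∈ L0, (Submodule.orthogonalProjectionOnto QH q : S) ∈ L0)
    (Hm C_P : ℝ) (hHm : 0 < Hm) (hCP : 0 ≤ C_P)
    (happrox : ∀ r : H1, ‖j r - (Submodule.orthogonalProjectionOnto QH (j r) : S)‖ ≤ C_P * Hm * ‖G r‖)
    (hGradChar : ∀ (pp : S) (g : L2v),
      (∀ v : Hdiv, ⟪D v, pp⟫ = -⟪g, ι v⟫) → ∃ pt : H1, j pt = pp ∧ G pt = g)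
    (π 𝒞 : Hdiv →L[ℝ] Hdiv) (hπproj : ∀ v : Hdiv, π (π v) = π v)
    (hcomm : ∀ v : Hdiv, D (π v) = (Submodule.orthogonalProjectionOnto QH (D v) : S))
    (h𝒞mem : ∀ v : Hdiv, 𝒞 v ∈ LinearMap.ker (π : Hdiv →ₗ[ℝ] Hdiv) ⊓ LinearMap.ker (D : Hdiv →ₗ[ℝ] S))
    (h𝒞eq : ∀ v : Hdiv, ∀ w ∈ LinearMap.ker (π : Hdiv →ₗ[ℝ] Hdiv) ⊓ LinearMap.ker (D : Hdiv →ₗ[ℝ] S),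
      ⟪Ainv (ι (𝒞 v)), ι w⟫ = ⟪Ainv (ι v), ι w⟫)
    (hDL0 : ∀ v : Hdiv, D v ∈ L0)
    -- inf-sup stability on the multiscale pair (V^ms, Q_H ∩ L²₀)
    (ρms : ℝ) (hρms : 0 < ρms)
    (hinfsup : ∀ qH ∈ QH ⊓ L0, qH ≠ 0 →
      ∃ v ∈ Submodule.map ((ContinuousLinearMap.id ℝ Hdiv - 𝒞) : Hdiv →ₗ[ℝ] Hdiv)
        (LinearMap.range (π : Hdiv →ₗ[ℝ] Hdiv)), v ≠ 0 ∧ ρms * ‖qH‖ * ‖v‖ ≤ ⟪D v, qH⟫)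
    (f : S) (hf : f ∈ L0)
    (u : Hdiv) (p : S) (hp : p ∈ L0)
    (h1 : ∀ v : Hdiv, ⟪Ainv (ι u), ι v⟫ + ⟪D v, p⟫ = 0)
    (h2 : ∀ q ∈ L0, ⟪D u, q⟫ = -⟪f, q⟫)
    (uPf : Hdiv) (pPf : S) (hpPf : pPf ∈ L0)
    (h1Pf : ∀ v : Hdiv, ⟪Ainv (ι uPf), ι v⟫ + ⟪D v, pPf⟫ = 0)
    (h2Pf : ∀ q ∈ L0, ⟪D uPf, q⟫ = -⟪(Submodule.orthogonalProjectionOnto QH f : S), q⟫)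
    (uHms : Hdiv) (pH : S)
    (huHms : uHms ∈ Submodule.map ((ContinuousLinearMap.id ℝ Hdiv - 𝒞) : Hdiv →ₗ[ℝ] Hdiv)
      (LinearMap.range (π : Hdiv →ₗ[ℝ] Hdiv)))
    (hpH : pH ∈ QH ⊓ L0)
    (hdivV : ∀ v ∈ Submodule.map ((ContinuousLinearMap.id ℝ Hdiv - 𝒞) : Hdiv →ₗ[ℝ] Hdiv)
      (LinearMap.range (π : Hdiv →ₗ[ℝ] Hdiv)), D v ∈ QH)
    (hd1 : ∀ v ∈ Submodule.map ((ContinuousLinearMap.id ℝ Hdiv - 𝒞) : Hdiv →ₗ[ℝ] Hdiv)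
      (LinearMap.range (π : Hdiv →ₗ[ℝ] Hdiv)), ⟪Ainv (ι uHms), ι v⟫ + ⟪D v, pH⟫ = 0)
    (hd2 : ∀ qH ∈ QH, ⟪D uHms, qH⟫ = -⟪f, qH⟫) :
    ‖p - pH‖ ≤ (1 + ρms⁻¹ * (β * C_P + 1)) *
      (Hm * ‖f - (Submodule.orthogonalProjectionOnto QH f : S)‖ +
        ‖p - (Submodule.orthogonalProjectionOnto QH p : S)‖) := by
  classical
  set Vms : Submodule ℝ Hdiv :=
    Submodule.map ((ContinuousLinearMap.id ℝ Hdiv - 𝒞) : Hdiv →ₗ[ℝ] Hdiv)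
      (LinearMap.range (π : Hdiv →ₗ[ℝ] Hdiv)) with hVms
  set Wsub : Submodule ℝ Hdiv := LinearMap.ker (π : Hdiv →ₗ[ℝ] Hdiv) ⊓ LinearMap.ker (D : Hdiv →ₗ[ℝ] S) with hWsub
  set Pf : S := (Submodule.orthogonalProjectionOnto QH f : S) with hPfdef
  set Pp : S := (Submodule.orthogonalProjectionOnto QH p : S) with hPpdef
  -- basic positivity of the form
  have hA0 : ∀ w : L2v, 0 ≤ ⟪Ainv w, w⟫ := fun w =>
    le_trans (by positivity) (hlow w)
  have hsymm : ∀ x y : L2v, ⟪Ainv y, x⟫ = ⟪Ainv x, y⟫ := fun x y => by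
    rw [hAsym, real_inner_comm]
  have hcs := psd_form_cauchy_schwarz Ainv hAsym hA0
  have hsqf : ∀ z : L2v, Real.sqrt ⟪Ainv z, z⟫ ≤ Real.sqrt β * ‖z‖ := by
    intro z
    calc Real.sqrt ⟪Ainv z, z⟫ ≤ Real.sqrt (β * ‖z‖ ^ 2) := Real.sqrt_le_sqrt (hupp z)
      _ = Real.sqrt β * ‖z‖ := by
          rw [Real.sqrt_mul hβ.le, Real.sqrt_sq (norm_nonneg _)]
  have hAnorm : ∀ w : L2v, ‖Ainv w‖ ≤ Real.sqrt β * Real.sqrt ⟪Ainv w, w⟫ := by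
    intro w
    rcases eq_or_lt_of_le (norm_nonneg (Ainv w)) with h | h
    · rw [← h]; positivity
    · have h1' : |⟪Ainv w, Ainv w⟫| ≤ Real.sqrt ⟪Ainv w, w⟫ *
          Real.sqrt ⟪Ainv (Ainv w), Ainv w⟫ := hcs w (Ainv w)
      have h2' : ⟪Ainv w, Ainv w⟫ = ‖Ainv w‖ ^ 2 := real_inner_self_eq_norm_sq _
      have h3' : Real.sqrt ⟪Ainv (Ainv w), Ainv w⟫ ≤ Real.sqrt β * ‖Ainv w‖ := hsqf _
      have h4' : ‖Ainv w‖ ^ 2 ≤ Real.sqrt ⟪Ainv w, w⟫ * (Real.sqrt β * ‖Ainv w‖) := by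
        calc ‖Ainv w‖ ^ 2 = |⟪Ainv w, Ainv w⟫| := by rw [h2', abs_of_nonneg (by positivity)]
          _ ≤ _ := h1'
          _ ≤ _ := by
              apply mul_le_mul_of_nonneg_left h3' (Real.sqrt_nonneg _)
      have := le_of_mul_le_mul_right (by nlinarith : ‖Ainv w‖ * ‖Ainv w‖ ≤
        (Real.sqrt β * Real.sqrt ⟪Ainv w, w⟫) * ‖Ainv w‖) h
      exact this
  -- orthogonality facts
  have horth : ∀ (x : S), ∀ s ∈ QH, ⟪x - (Submodule.orthogonalProjectionOnto QH x : S), s⟫ = 0 := by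
    intro x s hs
    rw [real_inner_comm]
    exact (Submodule.mem_orthogonal QH _).1 (Submodule.sub_starProjection_mem_orthogonal (K := QH) x) s hs
  have hPfQH : Pf ∈ QH := Submodule.coe_mem _
  have hPfL0 : Pf ∈ L0 := hPL0 f hf
  -- D uPf = -Pf
  have hDuPf : D uPf = -Pf := by
    have ht : D uPf + Pf ∈ L0 := L0.add_mem (hDL0 uPf) hPfL0
    have h0 : ⟪D uPf + Pf, D uPf + Pf⟫ = (0 : ℝ) := by
      have e1 := h2Pf (D uPf + Pf) ht
      rw [inner_add_left, e1]
      ring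
    exact eq_neg_of_add_eq_zero_left (inner_self_eq_zero.mp h0)
  -- D uHms = -Pf
  have hDuHms : D uHms = -Pf := by
    have ht : D uHms + Pf ∈ QH := QH.add_mem (hdivV uHms huHms) hPfQH
    have h0 : ⟪D uHms + Pf, D uHms + Pf⟫ = (0 : ℝ) := by
      have e1 := hd2 (D uHms + Pf) ht
      have e2 := horth f (D uHms + Pf) ht
      rw [inner_sub_left] at e2
      rw [inner_add_left, e1]
      linarith
    exact eq_neg_of_add_eq_zero_left (inner_self_eq_zero.mp h0)
  -- the ideal corrected solution
  set uI : Hdiv := π uPf - 𝒞 (π uPf) with huIdef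
  have huImem : uI ∈ Vms := by
    refine ⟨π uPf, LinearMap.mem_range.mpr ⟨uPf, rfl⟩, ?_⟩
    rfl
  have hDuI : D uI = -Pf := by
    have hD𝒞 : D (𝒞 (π uPf)) = 0 := (h𝒞mem (π uPf)).2
    have hPPf : (Submodule.orthogonalProjectionOnto QH Pf : S) = Pf := by
      rw [hPfdef]
      exact congrArg _ (Submodule.orthogonalProjectionOnto_mem_subspace_eq_self (Submodule.orthogonalProjectionOnto QH f))
    rw [huIdef, map_sub, hD𝒞, sub_zero, hcomm, hDuPf, map_neg]
    push_cast
    rw [hPPf]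
  -- uI - uPf ∈ W
  have hmW : uI - uPf ∈ Wsub := by
    constructor
    · show uI - uPf ∈ LinearMap.ker (π : Hdiv →ₗ[ℝ] Hdiv)
      rw [LinearMap.mem_ker]
      have hπ𝒞 : π (𝒞 (π uPf)) = 0 := (h𝒞mem (π uPf)).1
      show π (uI - uPf) = 0
      rw [huIdef, map_sub, map_sub, hπ𝒞, hπproj, sub_zero, sub_self]
    · show uI - uPf ∈ LinearMap.ker (D : Hdiv →ₗ[ℝ] S)
      rw [LinearMap.mem_ker]
      show D (uI - uPf) = 0
      rw [map_sub, hDuI, hDuPf, sub_self]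
  -- a-orthogonality of Vms and Wsub
  have hWorth : ∀ v ∈ Vms, ∀ w ∈ Wsub, ⟪Ainv (ι v), ι w⟫ = 0 := by
    rintro v ⟨y, hy, rfl⟩ w hw
    have hy' := h𝒞eq y w hw
    show ⟪Ainv (ι (y - 𝒞 y)), ι w⟫ = 0
    rw [map_sub, map_sub, inner_sub_left]
    rw [hy']
    ring
  have hWorth' : ∀ v ∈ Vms, ∀ w ∈ Wsub, ⟪Ainv (ι w), ι v⟫ = 0 := by
    intro v hv w hw
    rw [hsymm]
    exact hWorth v hv w hw
  -- ι uHms = ι uI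
  have hie : ι uHms = ι uI := by
    have heVms : uHms - uI ∈ Vms := Vms.sub_mem huHms huImem
    have hDe : D (uHms - uI) = 0 := by rw [map_sub, hDuHms, hDuI, sub_self]
    have ha := hd1 (uHms - uI) heVms
    have hb := h1Pf (uHms - uI)
    have hc := hWorth' (uHms - uI) heVms (uI - uPf) hmW
    rw [hDe, inner_zero_left, add_zero] at ha hb
    rw [map_sub] at hc
    have t0 : ∀ x : L2v, ⟪Ainv (ι (uHms - uI)), x⟫
        = ⟪Ainv (ι uHms), x⟫ - ⟪Ainv (ι uPf), x⟫ - ⟪Ainv (ι uI - ι uPf), x⟫ := by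
      intro x
      simp only [map_sub, inner_sub_left]
      ring
    have h0 : ⟪Ainv (ι (uHms - uI)), ι (uHms - uI)⟫ = (0 : ℝ) := by
      rw [t0, ha, hb, hc]
      ring
    have hle := hlow (ι (uHms - uI))
    rw [h0] at hle
    have hx2 : ‖ι (uHms - uI)‖ ^ 2 ≤ 0 :=
      le_of_mul_le_mul_left (by linarith : α * ‖ι (uHms - uI)‖ ^ 2 ≤ α * 0) hα
    have hx0 : ‖ι (uHms - uI)‖ ^ 2 = 0 := le_antisymm hx2 (sq_nonneg _)
    have h7 : ‖ι (uHms - uI)‖ ≤ 0 := by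
      nlinarith [hx0, norm_nonneg (ι (uHms - uI))]
    have h5 : ι (uHms - uI) = 0 := norm_le_zero_iff.mp h7
    rw [map_sub] at h5
    exact sub_eq_zero.mp h5
  -- key identity
  have hkey : ∀ v ∈ Vms, ⟪D v, Pp - pH⟫ = ⟪Ainv (ι uPf - ι u), ι v⟫ := by
    intro v hv
    have e0 : ⟪D v, p - Pp⟫ = (0 : ℝ) :=
      (Submodule.mem_orthogonal QH _).1 (Submodule.sub_starProjection_mem_orthogonal (K := QH) p)
        (D v) (hdivV v hv)
    have e1 := h1 v
    have e2 := hd1 v hv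
    have e3 := hWorth' v hv (uI - uPf) hmW
    rw [map_sub] at e3
    have e5 : ⟪Ainv (ι uHms), ι v⟫
        = ⟪Ainv (ι uPf), ι v⟫ + ⟪Ainv (ι uI - ι uPf), ι v⟫ := by
      rw [hie]
      simp only [map_sub, inner_sub_left]
      ring
    have lhs : ⟪D v, Pp - pH⟫ = -⟪D v, p - Pp⟫ + ⟪D v, p⟫ - ⟪D v, pH⟫ := by
      simp only [inner_sub_right]
      ring
    have rhs : ⟪Ainv (ι uPf - ι u), ι v⟫
        = ⟪Ainv (ι uPf), ι v⟫ - ⟪Ainv (ι u), ι v⟫ := by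
      simp only [map_sub, inner_sub_left]
    rw [lhs, e0, rhs]
    linarith
  -- the energy quantity
  have hX_eq : ⟪Ainv (ι u - ι uPf), ι u - ι uPf⟫ = ⟪f - Pf, p - pPf⟫ := by
    have e1 := h1 (u - uPf)
    have e2 := h1Pf (u - uPf)
    have e3 := h2 (p - pPf) (L0.sub_mem hp hpPf)
    have e4 := h2Pf (p - pPf) (L0.sub_mem hp hpPf)
    have hsAB : ⟪Ainv (ι uPf), ι u⟫ = ⟪Ainv (ι u), ι uPf⟫ := hsymm _ _
    simp only [map_sub, inner_sub_left, inner_sub_right] at e1 e2 e3 e4 ⊢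
    linarith
  have hchar : ∀ v : Hdiv, ⟪D v, p - pPf⟫ = -⟪Ainv (ι u - ι uPf), ι v⟫ := by
    intro v
    have e1 := h1 v
    have e2 := h1Pf v
    simp only [map_sub, inner_sub_left, inner_sub_right]
    linarith
  obtain ⟨r, hjr, hGr⟩ := hGradChar (p - pPf) (Ainv (ι u - ι uPf)) hchar
  have happ : ‖(p - pPf) - (Submodule.orthogonalProjectionOnto QH (p - pPf) : S)‖
      ≤ C_P * Hm * ‖Ainv (ι u - ι uPf)‖ := by
    have h' := happrox r
    rw [hjr, hGr] at h'
    exact h'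
  have hXle : ⟪Ainv (ι u - ι uPf), ι u - ι uPf⟫
      ≤ ‖f - Pf‖ * (C_P * Hm * ‖Ainv (ι u - ι uPf)‖) := by
    rw [hX_eq]
    have hsplit : ⟪f - Pf, p - pPf⟫
        = ⟪f - Pf, (p - pPf) - (Submodule.orthogonalProjectionOnto QH (p - pPf) : S)⟫ := by
      have h0 : ⟪f - Pf, (Submodule.orthogonalProjectionOnto QH (p - pPf) : S)⟫ = 0 :=
        horth f _ (Submodule.coe_mem _)
      conv_rhs => rw [inner_sub_right, h0, sub_zero]
    rw [hsplit]
    calc ⟪f - Pf, (p - pPf) - (Submodule.orthogonalProjectionOnto QH (p - pPf) : S)⟫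
        ≤ ‖f - Pf‖ * ‖(p - pPf) - (Submodule.orthogonalProjectionOnto QH (p - pPf) : S)‖ :=
          real_inner_le_norm _ _
      _ ≤ ‖f - Pf‖ * (C_P * Hm * ‖Ainv (ι u - ι uPf)‖) :=
          mul_le_mul_of_nonneg_left happ (norm_nonneg _)
  have hXnn : 0 ≤ ⟪Ainv (ι u - ι uPf), ι u - ι uPf⟫ := hA0 _
  have hs : Real.sqrt ⟪Ainv (ι u - ι uPf), ι u - ι uPf⟫
      ≤ Real.sqrt β * (C_P * Hm * ‖f - Pf‖) := by
    rcases eq_or_lt_of_le (Real.sqrt_nonneg ⟪Ainv (ι u - ι uPf), ι u - ι uPf⟫) with h | h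
    · rw [← h]; positivity
    · have hss : Real.sqrt ⟪Ainv (ι u - ι uPf), ι u - ι uPf⟫ *
          Real.sqrt ⟪Ainv (ι u - ι uPf), ι u - ι uPf⟫
          ≤ (Real.sqrt β * (C_P * Hm * ‖f - Pf‖)) *
            Real.sqrt ⟪Ainv (ι u - ι uPf), ι u - ι uPf⟫ := by
        rw [Real.mul_self_sqrt hXnn]
        calc ⟪Ainv (ι u - ι uPf), ι u - ι uPf⟫
            ≤ ‖f - Pf‖ * (C_P * Hm * ‖Ainv (ι u - ι uPf)‖) := hXle
          _ ≤ ‖f - Pf‖ * (C_P * Hm * (Real.sqrt β *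
              Real.sqrt ⟪Ainv (ι u - ι uPf), ι u - ι uPf⟫)) := by
              have := hAnorm (ι u - ι uPf)
              gcongr
          _ = (Real.sqrt β * (C_P * Hm * ‖f - Pf‖)) *
              Real.sqrt ⟪Ainv (ι u - ι uPf), ι u - ι uPf⟫ := by ring
      exact le_of_mul_le_mul_right hss h
  -- main estimate
  have hqHmem : Pp - pH ∈ QH ⊓ L0 := by
    refine Submodule.sub_mem _ ?_ hpH
    exact Submodule.mem_inf.mpr ⟨Submodule.coe_mem _, hPL0 p hp⟩
  have htri : ‖p - pH‖ ≤ ‖p - Pp‖ + ‖Pp - pH‖ := by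
    calc ‖p - pH‖ = ‖(p - Pp) + (Pp - pH)‖ := by rw [sub_add_sub_cancel]
      _ ≤ ‖p - Pp‖ + ‖Pp - pH‖ := norm_add_le _ _
  have hn1 : (0:ℝ) ≤ Hm * ‖f - Pf‖ := by positivity
  have hn2 : (0:ℝ) ≤ ‖p - Pp‖ := norm_nonneg _
  have hn3 : (0:ℝ) ≤ ρms⁻¹ := by positivity
  have hC : (0:ℝ) ≤ ρms⁻¹ * (β * C_P + 1) := by positivity
  by_cases hq0 : Pp - pH = (0 : S)
  · have hpe : Pp = pH := sub_eq_zero.mp hq0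
    rw [← hpe]
    have hexp : (1 + ρms⁻¹ * (β * C_P + 1)) * (Hm * ‖f - Pf‖ + ‖p - Pp‖)
        = Hm * ‖f - Pf‖ + ‖p - Pp‖
          + ρms⁻¹ * (β * C_P + 1) * (Hm * ‖f - Pf‖ + ‖p - Pp‖) := by ring
    have hmm : 0 ≤ ρms⁻¹ * (β * C_P + 1) * (Hm * ‖f - Pf‖ + ‖p - Pp‖) :=
      mul_nonneg hC (add_nonneg hn1 hn2)
    linarith
  · obtain ⟨v, hvmem, hv0, hineq⟩ := hinfsup (Pp - pH) hqHmem hq0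
    have hkv := hkey v hvmem
    have habs : ⟪D v, Pp - pH⟫ ≤ β * (C_P * Hm * ‖f - Pf‖) * ‖v‖ := by
      rw [hkv]
      have hneg : ι uPf - ι u = -(ι u - ι uPf) := (neg_sub _ _).symm
      have e1 : ⟪Ainv (ι uPf - ι u), ι v⟫ = -⟪Ainv (ι u - ι uPf), ι v⟫ := by
        rw [hneg, map_neg, inner_neg_left]
      rw [e1]
      calc -⟪Ainv (ι u - ι uPf), ι v⟫ ≤ |⟪Ainv (ι u - ι uPf), ι v⟫| := neg_le_abs _
        _ ≤ Real.sqrt ⟪Ainv (ι u - ι uPf), ι u - ι uPf⟫ *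
            Real.sqrt ⟪Ainv (ι v), ι v⟫ := hcs _ _
        _ ≤ (Real.sqrt β * (C_P * Hm * ‖f - Pf‖)) * (Real.sqrt β * ‖ι v‖) :=
            mul_le_mul hs (hsqf _) (Real.sqrt_nonneg _) (by positivity)
        _ ≤ (Real.sqrt β * (C_P * Hm * ‖f - Pf‖)) * (Real.sqrt β * ‖v‖) := by
            have := hι v
            gcongr
        _ = (Real.sqrt β * Real.sqrt β) * (C_P * Hm * ‖f - Pf‖) * ‖v‖ := by ring
        _ = β * (C_P * Hm * ‖f - Pf‖) * ‖v‖ := by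
            rw [Real.mul_self_sqrt hβ.le]
    have hv' : (0:ℝ) < ‖v‖ := norm_pos_iff.mpr hv0
    have h2' : ρms * ‖Pp - pH‖ ≤ β * (C_P * Hm * ‖f - Pf‖) := by
      have hle := le_trans hineq habs
      exact le_of_mul_le_mul_right (by linarith) hv'
    have hnq : ‖Pp - pH‖ ≤ ρms⁻¹ * (β * (C_P * Hm * ‖f - Pf‖)) := by
      calc ‖Pp - pH‖ = ρms⁻¹ * (ρms * ‖Pp - pH‖) := by
            field_simp
        _ ≤ ρms⁻¹ * (β * (C_P * Hm * ‖f - Pf‖)) :=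
            mul_le_mul_of_nonneg_left h2' hn3
    have hbc : (0:ℝ) ≤ ρms⁻¹ * β * C_P := by positivity
    have hq : ‖Pp - pH‖ ≤ (ρms⁻¹ * β * C_P) * (Hm * ‖f - Pf‖) := by
      have hrw : ρms⁻¹ * (β * (C_P * Hm * ‖f - Pf‖))
          = (ρms⁻¹ * β * C_P) * (Hm * ‖f - Pf‖) := by ring
      linarith [hnq, hrw.ge, hrw.le]
    have hexp : (1 + ρms⁻¹ * (β * C_P + 1)) * (Hm * ‖f - Pf‖ + ‖p - Pp‖)
        = Hm * ‖f - Pf‖ + ‖p - Pp‖ + (ρms⁻¹ * β * C_P) * (Hm * ‖f - Pf‖)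
          + ρms⁻¹ * (Hm * ‖f - Pf‖) + (ρms⁻¹ * β * C_P) * ‖p - Pp‖
          + ρms⁻¹ * ‖p - Pp‖ := by ring
    linarith [htri, hq, mul_nonneg hbc hn2, mul_nonneg hn3 hn1, mul_nonneg hn3 hn2, hn1]
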